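/- Let α ∈ ℂ and let φ, ψ : ℂ → ℂ be entire functions satisfying ψ''(x) = (2x − 2ψ(x)φ(x))·ψ(x) and φ''(x) = (2x − 2ψ(x)φ(x))·φ(x) for all x ∈ ℂ, together with φ'(x)ψ(x) − φ(x)ψ'(x) = 2α for all x ∈ ℂ. Assume φ(x) ≠ 0 for all x ∈ ℂ. Then the function u₀ := φ'/φ satisfies the Painlevé II equation with parameter α: u₀''(x) = 2u₀(x)³ − 4x·u₀(x) + 4(α + 1/2) for all x ∈ ℂ. -/

import Mathlib

/-- **Proposition 2.2 (i).** If entire functions `φ, ψ` satisfy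
`ψ''/ψ = φ''/φ = −2ψφ + 2x` and `φ'ψ − φψ' = 2α`, with `φ` nowhere vanishing,
then `u₀ = (log φ)' = φ'/φ` satisfies Painlevé II with parameter `α`:
`u₀'' = 2u₀³ − 4xu₀ + 4(α + 1/2)`. -/
theorem u0_satisfies_painleveII
    (α : ℂ) (φ ψ : ℂ → ℂ) (hφ : Differentiable ℂ φ) (hψ : Differentiable ℂ ψ)
    (hψ'' : ∀ x : ℂ, deriv (deriv ψ) x = (2 * x - 2 * ψ x * φ x) * ψ x)
    (hφ'' : ∀ x : ℂ, deriv (deriv φ) x = (2 * x - 2 * ψ x * φ x) * φ x)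
    (hW : ∀ x : ℂ, deriv φ x * ψ x - φ x * deriv ψ x = 2 * α)
    (hφ0 : ∀ x : ℂ, φ x ≠ 0) :
    ∀ x : ℂ,
      deriv (deriv (fun y => deriv φ y / φ y)) x =
        2 * (deriv φ x / φ x) ^ 3 - 4 * x * (deriv φ x / φ x) + 4 * (α + 1 / 2) := by
  have hφ' : Differentiable ℂ (deriv φ) :=
    ((contDiff_infty_iff_deriv.mp hφ.contDiff).2).differentiable (by simp)
  have hud : Differentiable ℂ (fun y => deriv φ y / φ y) := hφ'.div hφ hφ0
  have hu' : ∀ x : ℂ, deriv (fun y => deriv φ y / φ y) x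
      = 2 * x - 2 * ψ x * φ x - (deriv φ x / φ x) ^ 2 := by
    intro x
    rw [deriv_fun_div (hφ'.differentiableAt) (hφ.differentiableAt) (hφ0 x), hφ'' x]
    field_simp [hφ0 x]
  intro x
  have hderiv_u_eq : deriv (fun y => deriv φ y / φ y)
      = fun y => 2 * y - 2 * ψ y * φ y - (deriv φ y / φ y) ^ 2 := funext hu'
  rw [hderiv_u_eq]
  have h1 : HasDerivAt (fun y : ℂ => 2 * y) 2 x := by
    simpa using (hasDerivAt_id x).const_mul (2 : ℂ)
  have h2 : HasDerivAt (fun y => 2 * ψ y * φ y)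
      (2 * deriv ψ x * φ x + 2 * ψ x * deriv φ x) x :=
    ((hψ.differentiableAt.hasDerivAt.const_mul (2 : ℂ)).mul hφ.differentiableAt.hasDerivAt)
  have h3 : HasDerivAt (fun y => (deriv φ y / φ y) ^ 2)
      (2 * (deriv φ x / φ x) * deriv (fun y => deriv φ y / φ y) x) x := by
    simpa [pow_one, mul_comm, mul_assoc, mul_left_comm] using
      (hud.differentiableAt.hasDerivAt.fun_pow 2)
  have hA := (h1.fun_sub h2).fun_sub h3
  rw [hA.deriv, hu' x]
  have hψx : deriv ψ x = (deriv φ x * ψ x - 2 * α) / φ x := by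
    rw [eq_div_iff (hφ0 x)]
    linear_combination -hW x
  rw [hψx]
  field_simp [hφ0 x]
  ring
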